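/- arXiv:2105.07641 — 2 statements merged into one kernel-verified Lean document; each statement's English description precedes it below -/
import Mathlib

section
/- Let B = A + τ r rᵀ with A an n×n symmetric matrix, r ∈ ℝⁿ, τ ∈ ℝ, and suppose z ∈ ℂ with both B − zI and A − zI invertible and 1 + τ rᵀ(A−zI)⁻¹r ≠ 0. Then tr((B−zI)⁻¹) − tr((A−zI)⁻¹) = −τ rᵀ(A−zI)⁻² r / (1 + τ rᵀ(A−zI)⁻¹ r). -/
open Matrix

/-- Rank-one update formula for the trace of the resolvent: if `B = A + τ r rᵀ` with `A`
symmetric, `z` not an eigenvalue of `A` nor of `B`, and `1 + τ rᵀ(A−zI)⁻¹r ≠ 0`, then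
`tr((B−zI)⁻¹) − tr((A−zI)⁻¹) = −τ rᵀ(A−zI)⁻² r / (1 + τ rᵀ(A−zI)⁻¹ r)`. -/
theorem stmt3 {n : ℕ} (A B : Matrix (Fin n) (Fin n) ℝ) (hAs : A.IsSymm)
    (r : Fin n → ℝ) (τ : ℝ) (z : ℂ)
    (hB : B = A + τ • Matrix.vecMulVec r r)
    (hAz : IsUnit (A.map Complex.ofReal - z • 1).det)
    (hBz : IsUnit (B.map Complex.ofReal - z • 1).det)
    (hden : 1 + (τ : ℂ) *
        ((fun i => (r i : ℂ)) ⬝ᵥ ((A.map Complex.ofReal - z • 1)⁻¹).mulVec (fun i => (r i : ℂ)))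
        ≠ 0) :
    ((B.map Complex.ofReal - z • 1)⁻¹).trace - ((A.map Complex.ofReal - z • 1)⁻¹).trace
      = - (τ : ℂ) *
          ((fun i => (r i : ℂ)) ⬝ᵥ (((A.map Complex.ofReal - z • 1)⁻¹) ^ 2).mulVec
            (fun i => (r i : ℂ)))
        / (1 + (τ : ℂ) *
            ((fun i => (r i : ℂ)) ⬝ᵥ ((A.map Complex.ofReal - z • 1)⁻¹).mulVec
              (fun i => (r i : ℂ)))) := by
  set M : Matrix (Fin n) (Fin n) ℂ := A.map Complex.ofReal - z • 1 with hM
  set u : Fin n → ℂ := fun i => (r i : ℂ) with hu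
  set c : ℂ := (τ : ℂ) with hc
  set d : ℂ := u ⬝ᵥ M⁻¹.mulVec u with hd
  set k : ℂ := c / (1 + c * d) with hk
  have hBM : B.map Complex.ofReal - z • 1 = M + c • vecMulVec u u := by
    subst hB
    ext i j
    simp [hM, Matrix.map, vecMulVec_apply, Matrix.add_apply, Matrix.smul_apply,
      Matrix.sub_apply, hu, hc]
    ring
  have hMinv : M * M⁻¹ = 1 := Matrix.mul_nonsing_inv _ hAz
  have hMinv' : M⁻¹ * M = 1 := Matrix.nonsing_inv_mul _ hAz
  -- Sherman–Morrison
  have hden' : 1 + c * d ≠ 0 := hden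
  set P : Matrix (Fin n) Unit ℂ := replicateCol Unit u with hP
  set Q : Matrix Unit (Fin n) ℂ := replicateRow Unit u with hQ
  have hvv : vecMulVec u u = P * Q := vecMulVec_eq Unit u u
  have hQMP : Q * (M⁻¹ * P) = d • (1 : Matrix Unit Unit ℂ) := by
    have : M⁻¹ * P = replicateCol Unit (M⁻¹.mulVec u) := (replicateCol_mulVec _ _).symm
    rw [this, hQ, replicateRow_mul_replicateCol]
    ext i j
    simp [hd, Matrix.smul_apply, Matrix.one_apply]
  have key : (M + c • (P * Q)) * (M⁻¹ - k • (M⁻¹ * (P * Q) * M⁻¹)) = 1 := by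
    have expand : (M + c • (P * Q)) * (M⁻¹ - k • (M⁻¹ * (P * Q) * M⁻¹))
        = 1 + (c - k - c * k * d) • (P * Q * M⁻¹) := by
      have h1 : M * (M⁻¹ * (P * Q) * M⁻¹) = P * Q * M⁻¹ := by
        rw [← Matrix.mul_assoc, ← Matrix.mul_assoc, ← Matrix.mul_assoc, hMinv, Matrix.one_mul]
      have h2 : P * Q * (M⁻¹ * (P * Q) * M⁻¹) = d • (P * Q * M⁻¹) := by
        calc P * Q * (M⁻¹ * (P * Q) * M⁻¹)
            = P * (Q * (M⁻¹ * P)) * (Q * M⁻¹) := by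
              simp only [Matrix.mul_assoc]
          _ = d • (P * Q * M⁻¹) := by
              rw [hQMP, Matrix.mul_smul, Matrix.mul_one, Matrix.smul_mul]
              simp only [Matrix.mul_assoc]
      simp only [Matrix.add_mul, Matrix.mul_sub, Matrix.mul_smul, Matrix.smul_mul, hMinv, h1, h2]
      module
    rw [expand]
    have : c - k - c * k * d = 0 := by
      rw [hk]
      field_simp
      ring
    rw [this, zero_smul, add_zero]
  have hBinv : (B.map Complex.ofReal - z • 1)⁻¹ = M⁻¹ - k • (M⁻¹ * (P * Q) * M⁻¹) := by
    rw [hBM, hvv]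
    exact Matrix.inv_eq_right_inv key
  have htr : ((M⁻¹ * (P * Q) * M⁻¹)).trace = u ⬝ᵥ (M⁻¹ ^ 2).mulVec u := by
    have : M⁻¹ * (P * Q) * M⁻¹ = (M⁻¹ * P) * (Q * M⁻¹) := by
      simp only [Matrix.mul_assoc]
    rw [this, Matrix.trace_mul_comm, Matrix.mul_assoc, ← Matrix.mul_assoc M⁻¹ M⁻¹ P]
    have hMP : M⁻¹ * M⁻¹ * P = replicateCol Unit ((M⁻¹ * M⁻¹).mulVec u) := (replicateCol_mulVec _ _).symm
    rw [hMP, hQ, Matrix.trace_mul_comm, trace_replicateCol_mul_replicateRow, dotProduct_comm, sq]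
  rw [hBinv, Matrix.trace_sub, Matrix.trace_smul, htr, sub_sub_cancel_left]
  rw [hk]
  field_simp
  rw [smul_eq_mul, ← mul_assoc, mul_div_cancel₀ c hden']
end

section
/- For any eigenvalue-counting (spectral) distributions: let A and B be n×n Hermitian matrices and F^A, F^B their empirical spectral distribution functions. Then the Kolmogorov (sup-norm) distance satisfies ‖F^A − F^B‖_∞ ≤ rank(A − B)/n. -/
open Matrix Finset Module Submodule
open scoped InnerProductSpace

section helpers

variable {n : ℕ}

/-- Coefficients of a vector in the span of part of an orthonormal basis vanish
outside that part. -/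
lemma repr_eq_zero_of_not_mem (b : OrthonormalBasis (Fin n) ℂ (EuclideanSpace ℂ (Fin n)))
    (s : Finset (Fin n)) {v : EuclideanSpace ℂ (Fin n)}
    (hv : v ∈ Submodule.span ℂ (⇑b '' (s : Set (Fin n)))) {j : Fin n} (hj : j ∉ s) :
    b.repr v j = 0 := by
  rw [b.repr_apply_apply]
  induction hv using Submodule.span_induction with
  | mem w hw =>
    obtain ⟨i, hi, rfl⟩ := hw
    exact b.orthonormal.2 (fun h => hj (h ▸ hi))
  | zero => simp
  | add w u hw hu ihw ihu => simp [inner_add_right, ihw, ihu]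
  | smul a w hw ihw => simp [inner_smul_right, ihw]

lemma eigen_apply (M : Matrix (Fin n) (Fin n) ℂ) (hM : M.IsHermitian) (j : Fin n) :
    Matrix.toEuclideanLin M (hM.eigenvectorBasis j)
      = (hM.eigenvalues j : ℂ) • hM.eigenvectorBasis j := by
  have h := hM.mulVec_eigenvectorBasis j
  ext i
  have := congrFun h i
  simpa [Matrix.toEuclideanLin_apply] using this

lemma quad_eq (M : Matrix (Fin n) (Fin n) ℂ) (hM : M.IsHermitian)
    (v : EuclideanSpace ℂ (Fin n)) :
    ⟪v, Matrix.toEuclideanLin M v⟫_ℂ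
      = (↑(∑ j, hM.eigenvalues j * ‖hM.eigenvectorBasis.repr v j‖ ^ 2) : ℂ) := by
  set b := hM.eigenvectorBasis
  have hsym : (Matrix.toEuclideanLin M).IsSymmetric :=
    Matrix.isHermitian_iff_isSymmetric.1 hM
  rw [← b.sum_inner_mul_inner v (Matrix.toEuclideanLin M v)]
  push_cast
  refine Finset.sum_congr rfl fun j _ => ?_
  have h1 : ⟪b j, Matrix.toEuclideanLin M v⟫_ℂ
      = (hM.eigenvalues j : ℂ) * ⟪b j, v⟫_ℂ := by
    rw [← hsym (b j) v, eigen_apply M hM j, inner_smul_left]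
    simp
    exact Or.inl rfl
  rw [h1, b.repr_apply_apply]
  have h2 : ⟪v, b j⟫_ℂ = starRingEnd ℂ ⟪b j, v⟫_ℂ := (inner_conj_symm _ _).symm
  rw [h2]
  rw [mul_comm (starRingEnd ℂ ⟪b j, v⟫_ℂ), mul_assoc, Complex.mul_conj]
  simp [Complex.normSq_eq_norm_sq]

lemma norm_sq_eq (b : OrthonormalBasis (Fin n) ℂ (EuclideanSpace ℂ (Fin n)))
    (v : EuclideanSpace ℂ (Fin n)) :
    ‖v‖ ^ 2 = ∑ j, ‖b.repr v j‖ ^ 2 := by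
  have h := b.repr.norm_map v
  rw [← h, EuclideanSpace.norm_eq]
  rw [Real.sq_sqrt (by positivity)]

end helpers

lemma count_le_aux {n : ℕ} (A B : Matrix (Fin n) (Fin n) ℂ)
    (hA : A.IsHermitian) (hB : B.IsHermitian) (x : ℝ) :
    (Finset.univ.filter fun j => hA.eigenvalues j ≤ x).card ≤
      (Finset.univ.filter fun j => hB.eigenvalues j ≤ x).card + (A - B).rank := by
  classical
  set bA := hA.eigenvectorBasis with hbA
  set bB := hB.eigenvectorBasis with hbB
  set S : Finset (Fin n) := Finset.univ.filter (fun j => hA.eigenvalues j ≤ x) with hS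
  set S' : Finset (Fin n) := Finset.univ.filter (fun j => hB.eigenvalues j ≤ x) with hS'
  set T : Finset (Fin n) := Finset.univ.filter (fun j => ¬ hB.eigenvalues j ≤ x) with hT
  set V : Submodule ℂ (EuclideanSpace ℂ (Fin n)) :=
    Submodule.span ℂ (⇑bA '' (S : Set (Fin n))) with hV
  set W : Submodule ℂ (EuclideanSpace ℂ (Fin n)) :=
    Submodule.span ℂ (⇑bB '' (T : Set (Fin n))) with hW
  set K : Submodule ℂ (EuclideanSpace ℂ (Fin n)) :=
    LinearMap.ker (Matrix.toEuclideanLin (A - B)) with hK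
  have hdimE : finrank ℂ (EuclideanSpace ℂ (Fin n)) = n := by
    rw [finrank_euclideanSpace, Fintype.card_fin]
  -- dimensions
  have dimspan : ∀ (b : OrthonormalBasis (Fin n) ℂ (EuclideanSpace ℂ (Fin n)))
      (s : Finset (Fin n)),
      finrank ℂ (Submodule.span ℂ (⇑b '' (s : Set (Fin n)))) = s.card := by
    intro b s
    have hli : LinearIndependent ℂ (fun j : {j // j ∈ s} => b j) :=
      (b.orthonormal.linearIndependent).comp _ Subtype.val_injective
    have hrange : Set.range (fun j : {j // j ∈ s} => b j) = ⇑b '' (s : Set (Fin n)) := by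
      ext w; simp [Set.mem_image]
    rw [← hrange, finrank_span_eq_card hli, Fintype.card_coe]
  have dimV : finrank ℂ V = S.card := dimspan bA S
  have dimW : finrank ℂ W = T.card := dimspan bB T
  have dimK : finrank ℂ K + (A - B).rank = n := by
    have h := LinearMap.finrank_range_add_finrank_ker (Matrix.toEuclideanLin (A - B))
    have hr : finrank ℂ (LinearMap.range (Matrix.toEuclideanLin (A - B))) = (A - B).rank := by
      rw [Matrix.toEuclideanLin_eq_toLin,
        ← Matrix.rank_eq_finrank_range_toLin (A - B) (PiLp.basisFun 2 ℂ (Fin n))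
          (PiLp.basisFun 2 ℂ (Fin n))]
    rw [hr, hdimE] at h
    rw [hK]
    omega
  -- trivial intersection
  have hbot : V ⊓ W ⊓ K = ⊥ := by
    rw [eq_bot_iff]
    intro v hv
    simp only [Submodule.mem_inf] at hv
    obtain ⟨⟨hvV, hvW⟩, hvK⟩ := hv
    simp only [Submodule.mem_bot]
    by_contra hv0
    have hAB : Matrix.toEuclideanLin A v = Matrix.toEuclideanLin B v := by
      have h := LinearMap.mem_ker.1 hvK
      rw [map_sub, LinearMap.sub_apply, sub_eq_zero] at h
      exact h
    have hQA : ∑ j, hA.eigenvalues j * ‖bA.repr v j‖ ^ 2 ≤ x * ‖v‖ ^ 2 := by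
      rw [norm_sq_eq bA v, Finset.mul_sum]
      refine Finset.sum_le_sum fun j _ => ?_
      by_cases hj : j ∈ S
      · have hle : hA.eigenvalues j ≤ x := (Finset.mem_filter.1 hj).2
        exact mul_le_mul_of_nonneg_right hle (by positivity)
      · rw [repr_eq_zero_of_not_mem bA S hvV hj]; simp
    have hQB : x * ‖v‖ ^ 2 < ∑ j, hB.eigenvalues j * ‖bB.repr v j‖ ^ 2 := by
      rw [norm_sq_eq bB v, Finset.mul_sum]
      obtain ⟨j₀, hj₀⟩ : ∃ j, bB.repr v j ≠ 0 := by
        by_contra h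
        push_neg at h
        apply hv0
        have hz : bB.repr v = 0 := by
          ext j; exact h j
        apply bB.repr.injective
        simpa using hz
      have hj₀T : j₀ ∈ T := by
        by_contra h
        exact hj₀ (repr_eq_zero_of_not_mem bB T hvW h)
      refine Finset.sum_lt_sum (fun j _ => ?_) ⟨j₀, Finset.mem_univ j₀, ?_⟩
      · by_cases hj : j ∈ T
        · have hx : x < hB.eigenvalues j := lt_of_not_ge (Finset.mem_filter.1 hj).2
          exact mul_le_mul_of_nonneg_right hx.le (by positivity)
        · rw [repr_eq_zero_of_not_mem bB T hvW hj]; simp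
      · have hx : x < hB.eigenvalues j₀ := lt_of_not_ge (Finset.mem_filter.1 hj₀T).2
        exact mul_lt_mul_of_pos_right hx (pow_pos (norm_pos_iff.mpr hj₀) 2)
    have hsum : ∑ j, hA.eigenvalues j * ‖bA.repr v j‖ ^ 2
        = ∑ j, hB.eigenvalues j * ‖bB.repr v j‖ ^ 2 := by
      have h := quad_eq A hA v
      rw [hAB, quad_eq B hB v] at h
      exact_mod_cast h.symm
    linarith
  -- dimension counting
  have e1 := Submodule.finrank_sup_add_finrank_inf_eq V W
  have e2 := Submodule.finrank_sup_add_finrank_inf_eq (V ⊓ W) K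
  have l1 : finrank ℂ ↥(V ⊔ W) ≤ n := le_trans (Submodule.finrank_le _) (le_of_eq hdimE)
  have l2 : finrank ℂ ↥((V ⊓ W) ⊔ K) ≤ n := le_trans (Submodule.finrank_le _) (le_of_eq hdimE)
  have hb0 : finrank ℂ ↥(V ⊓ W ⊓ K) = 0 := by rw [hbot]; exact finrank_bot ℂ _
  have cardT : S'.card + T.card = n := by
    have h := Finset.card_filter_add_card_filter_not
      (s := (Finset.univ : Finset (Fin n))) (p := fun j => hB.eigenvalues j ≤ x)
    simpa [hS', hT] using h
  omega

lemma rank_sub_comm {n : ℕ} (A B : Matrix (Fin n) (Fin n) ℂ) :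
    (B - A).rank = (A - B).rank := by
  have h : B - A = -(A - B) := (neg_sub A B).symm
  have hm : (-(A - B)).mulVecLin = -((A - B).mulVecLin) := by
    ext v
    simp [Matrix.neg_mulVec]
  rw [h, Matrix.rank, Matrix.rank, hm, LinearMap.range_neg]

/-- Bai–Silverstein rank inequality: the Kolmogorov distance between the empirical
spectral distribution functions of two Hermitian matrices `A`, `B` is bounded by
`rank(A − B)/n`. -/
theorem stmt4 {n : ℕ} (hn : 0 < n) (A B : Matrix (Fin n) (Fin n) ℂ)
    (hA : A.IsHermitian) (hB : B.IsHermitian) (x : ℝ) :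
    |((Finset.univ.filter fun j => hA.eigenvalues j ≤ x).card : ℝ) / n
      - ((Finset.univ.filter fun j => hB.eigenvalues j ≤ x).card : ℝ) / n|
      ≤ ((A - B).rank : ℝ) / n := by
  have h1 := count_le_aux A B hA hB x
  have h2 := count_le_aux B A hB hA x
  rw [rank_sub_comm A B] at h2
  have hn' : (0:ℝ) < n := by exact_mod_cast hn
  rw [← sub_div, abs_div, abs_of_pos hn']
  have habs : |(((Finset.univ.filter fun j => hA.eigenvalues j ≤ x).card : ℝ))
      - ((Finset.univ.filter fun j => hB.eigenvalues j ≤ x).card : ℝ)|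
      ≤ ((A - B).rank : ℝ) := by
    rw [abs_sub_le_iff]
    constructor
    · have : ((Finset.univ.filter fun j => hA.eigenvalues j ≤ x).card : ℝ)
          ≤ ((Finset.univ.filter fun j => hB.eigenvalues j ≤ x).card : ℝ) + ((A - B).rank : ℝ) := by
        exact_mod_cast h1
      linarith
    · have : ((Finset.univ.filter fun j => hB.eigenvalues j ≤ x).card : ℝ)
          ≤ ((Finset.univ.filter fun j => hA.eigenvalues j ≤ x).card : ℝ) + ((A - B).rank : ℝ) := by
        exact_mod_cast h2
      linarith
  gcongr
end
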